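/- Let p be a prime dividing n+1, let 0 ≤ i ≤ v_p(n+1), and let L be a proper ℤG-sublattice of L(p^i) whose index |L(p^i) : L| is a finite power of p. Then: (1) if i = 0, then L ⊆ L(p); (2) if 0 < i < v_p(n+1), then L ⊆ L(p^{i+1}) or L ⊆ p·L(p^{i−1}); (3) if i = v_p(n+1), then L ⊆ p·L(p^{v_p(n+1)−1}). -/

import Mathlib

open Pointwise

/-- The matrix by which the adjacent transposition `(k k+1)` acts:
`E^{k,k-1} + 2 E^{k,k} + E^{k,k+1} - I_n` (indices `1,…,n` in the paper,
here shifted to `0,…,n-1`; out-of-range `E^{i,j}` are `0`). -/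
def craigA (n : ℕ) (k : Fin n) : Matrix (Fin n) (Fin n) ℚ :=
  Matrix.of fun i j =>
    (if (i : ℕ) = (k : ℕ) ∧ (j : ℕ) + 1 = (k : ℕ) then 1 else 0)
    + (if (i : ℕ) = (k : ℕ) ∧ (j : ℕ) = (k : ℕ) then 2 else 0)
    + (if (i : ℕ) = (k : ℕ) ∧ (j : ℕ) = (k : ℕ) + 1 then 1 else 0)
    - (if i = j then 1 else 0)

/-- `v = e_n + Σ_{i=1}^{n-1} (-1)^{n+1-i} i e_i` (with `e_i` the standard basis,
shifted to `0`-based indexing). -/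
def craigV (n : ℕ) : Fin n → ℚ :=
  fun j => if (j : ℕ) = n - 1 then 1 else (-1 : ℚ) ^ (n - (j : ℕ)) * ((j : ℕ) + 1)

/-- `L(d) = (⊕_{i=1}^{n-1} ℤ·d·e_i) ⊕ ℤ·v` as a `ℤ`-submodule of `ℚ^n`. -/
def craigL (n : ℕ) (d : ℕ) : Submodule ℤ (Fin n → ℚ) :=
  Submodule.span ℤ
    (insert (craigV n) {x | ∃ j : Fin n, (j : ℕ) < n - 1 ∧ x = (d : ℚ) • (Pi.single j 1 : Fin n → ℚ)})

/-- A `ℤ`-submodule is invariant under the action `ρ` of `𝔖_{n+1}`. -/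
def Invar {n : ℕ} (ρ : Equiv.Perm (Fin (n + 1)) →* Matrix (Fin n) (Fin n) ℚ)
    (N : Submodule ℤ (Fin n → ℚ)) : Prop :=
  ∀ g : Equiv.Perm (Fin (n + 1)), ∀ x ∈ N, (ρ g).mulVec x ∈ N

/-- `N` is a `ℤG`-sublattice of `M`. -/
def IsSubl {n : ℕ} (ρ : Equiv.Perm (Fin (n + 1)) →* Matrix (Fin n) (Fin n) ℚ)
    (M N : Submodule ℤ (Fin n → ℚ)) : Prop :=
  N ≤ M ∧ Invar ρ N

/-- The index `|M : N|` of `N` in `M` as additive subgroups (`0` if infinite). -/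
noncomputable def subIndex {n : ℕ} (N M : Submodule ℤ (Fin n → ℚ)) : ℕ :=
  AddSubgroup.relIndex N.toAddSubgroup M.toAddSubgroup

/-- Isomorphism of `ℤG`-lattices: a `ℤ`-linear isomorphism commuting with the
action of every `ρ g`. -/
def IsZGIso {n : ℕ} (ρ : Equiv.Perm (Fin (n + 1)) →* Matrix (Fin n) (Fin n) ℚ)
    (N N' : Submodule ℤ (Fin n → ℚ)) : Prop :=
  ∃ e : N ≃ₗ[ℤ] N',
    ∀ (g : Equiv.Perm (Fin (n + 1))) (x : N)
      (hx : (ρ g).mulVec (x : Fin n → ℚ) ∈ N),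
      ((e ⟨(ρ g).mulVec (x : Fin n → ℚ), hx⟩ : N') : Fin n → ℚ)
        = (ρ g).mulVec ((e x : N') : Fin n → ℚ)

/-- `N` is a `p`-maximal sublattice of `M`: a maximal element of the set of
proper `ℤG`-sublattices of `M` containing `p·M`. -/
def IsPMaximal {n : ℕ} (ρ : Equiv.Perm (Fin (n + 1)) →* Matrix (Fin n) (Fin n) ℚ)
    (p : ℕ) (M N : Submodule ℤ (Fin n → ℚ)) : Prop :=
  (IsSubl ρ M N ∧ N ≠ M ∧ (p : ℚ) • M ≤ N) ∧
    ∀ N' : Submodule ℤ (Fin n → ℚ),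
      IsSubl ρ M N' → N' ≠ M → (p : ℚ) • M ≤ N' → N ≤ N' → N' = N

/-- `rad_p(M)`: the intersection of all `p`-maximal sublattices of `M`. -/
def radP {n : ℕ} (ρ : Equiv.Perm (Fin (n + 1)) →* Matrix (Fin n) (Fin n) ℚ)
    (p : ℕ) (M : Submodule ℤ (Fin n → ℚ)) : Submodule ℤ (Fin n → ℚ) :=
  sInf {N | IsPMaximal ρ p M N}

/-- `Φ_p(M)`: the `ℤG`-sublattices `L` of `M` with `rad_p(M) ⊆ L ⊆ M`. -/
def PhiP {n : ℕ} (ρ : Equiv.Perm (Fin (n + 1)) →* Matrix (Fin n) (Fin n) ℚ)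
    (p : ℕ) (M : Submodule ℤ (Fin n → ℚ)) : Set (Submodule ℤ (Fin n → ℚ)) :=
  {L | IsSubl ρ M L ∧ radP ρ p M ≤ L}

/-- `μ_p(M, L) = Σ_J (-1)^{|J|}` over subsets `J` of `max_p(M)` with
`∩_{N ∈ J} N = L` (the empty intersection being `M`). -/
noncomputable def muP {n : ℕ}
    (ρ : Equiv.Perm (Fin (n + 1)) →* Matrix (Fin n) (Fin n) ℚ)
    (p : ℕ) (M L : Submodule ℤ (Fin n → ℚ)) : ℤ :=
  ∑ᶠ J ∈ {J : Finset (Submodule ℤ (Fin n → ℚ)) |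
      (∀ N ∈ J, IsPMaximal ρ p M N) ∧ M ⊓ J.inf id = L},
    (-1 : ℤ) ^ J.card


/-! Auxiliary development -/

/-- integer version of `craigV (m+2)` -/
def vz (m : ℕ) (j : Fin (m+2)) : ℤ :=
  if (j : ℕ) = m + 1 then 1 else (-1) ^ (m + 2 - (j : ℕ)) * ((j : ℕ) + 1)

def lastI (m : ℕ) : Fin (m+2) := ⟨m+1, by omega⟩

lemma craigV_eq_vz (m : ℕ) (j : Fin (m+2)) : craigV (m+2) j = (vz m j : ℚ) := by
  unfold craigV vz
  have : m + 2 - 1 = m + 1 := by omega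
  rw [this]
  split <;> push_cast <;> ring

lemma vz_I3 (m : ℕ) : vz m ⟨m, by omega⟩ + 2 = (m : ℤ) + 3 := by
  unfold vz
  simp only [Fin.val_mk]
  rw [if_neg (by omega)]
  have : m + 2 - m = 2 := by omega
  rw [this]; push_cast; ring

lemma vz_I2 (m : ℕ) :
    (if m = 0 then 0 else vz m ⟨m - 1, by omega⟩) + 2 * vz m ⟨m, by omega⟩ + 1 = (m : ℤ) + 3 := by
  rcases Nat.eq_zero_or_pos m with hm | hm
  · subst hm
    simp [vz]
  · rw [if_neg (by omega)]
    unfold vz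
    simp only [Fin.val_mk]
    rw [if_neg (by omega), if_neg (by omega)]
    have h1 : m + 2 - (m - 1) = 3 := by omega
    have h2 : m + 2 - m = 2 := by omega
    rw [h1, h2]
    have : ((m : ℤ) - 1) + 1 = (m : ℤ) := by ring
    push_cast [Nat.cast_sub hm]
    ring

lemma vz_I1 (m : ℕ) (k : ℕ) (hk : k + 1 < m + 1) :
    (if k = 0 then 0 else vz m ⟨k - 1, by omega⟩) + 2 * vz m ⟨k, by omega⟩
      + vz m ⟨k + 1, by omega⟩ = 0 := by
  rcases Nat.eq_zero_or_pos k with h0 | h0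
  · subst h0
    rw [if_pos rfl]
    unfold vz
    simp only [Fin.val_mk]
    rw [if_neg (by omega), if_neg (by omega)]
    have h1 : m + 2 - 0 = (m + 1 - 1) + 2 := by omega
    have h2 : m + 2 - (0+1) = (m + 1 - 1) + 1 := by omega
    rw [h1, h2]
    push_cast
    ring
  · rw [if_neg (by omega)]
    unfold vz
    simp only [Fin.val_mk]
    rw [if_neg (by omega), if_neg (by omega), if_neg (by omega)]
    have h1 : m + 2 - (k - 1) = (m + 1 - k) + 2 := by omega
    have h2 : m + 2 - k = (m + 1 - k) + 1 := by omega
    have h3 : m + 2 - (k + 1) = m + 1 - k := by omega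
    rw [h1, h2, h3]
    have : ((k : ℤ) - 1) + 1 = (k : ℤ) := by ring
    push_cast [Nat.cast_sub h0]
    ring

/-- `c` is the coordinate vector of `x` in the lattice `L(d)` (dimension `m+2`). -/
def Coords (m d : ℕ) (x : Fin (m+2) → ℚ) (c : Fin (m+2) → ℤ) : Prop :=
  ∀ j : Fin (m+2), x j = if (j : ℕ) = m + 1 then (c j : ℚ)
    else (c j : ℚ) * d + (c (lastI m) : ℚ) * (vz m j : ℚ)

lemma coords_add {m d : ℕ} {x y : Fin (m+2) → ℚ} {c c' : Fin (m+2) → ℤ}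
    (hx : Coords m d x c) (hy : Coords m d y c') : Coords m d (x + y) (c + c') := by
  intro j
  have := hx j; have := hy j
  simp only [Pi.add_apply]
  split <;> [skip; skip] <;> (rw [hx j, hy j]) <;> simp_all <;> push_cast <;> ring

lemma coords_zsmul {m d : ℕ} {x : Fin (m+2) → ℚ} {c : Fin (m+2) → ℤ} (a : ℤ)
    (hx : Coords m d x c) : Coords m d (a • x) (a • c) := by
  intro j
  simp only [Pi.smul_apply, smul_eq_mul, zsmul_eq_mul]
  rw [hx j]
  split <;> push_cast <;> ring

lemma coords_zero (m d : ℕ) : Coords m d 0 0 := by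
  intro j; simp

lemma mem_craigL_iff (m d : ℕ) (x : Fin (m+2) → ℚ) :
    x ∈ craigL (m+2) d ↔ ∃ c : Fin (m+2) → ℤ, Coords m d x c := by
  constructor
  · intro hx
    induction hx using Submodule.span_induction with
    | mem z hz =>
      rcases hz with rfl | ⟨j0, hj0, rfl⟩
      · exact ⟨Pi.single (lastI m) 1, by
          intro j
          rw [craigV_eq_vz]
          by_cases hj : (j : ℕ) = m + 1
          · have : j = lastI m := by apply Fin.ext; simpa [lastI]
            subst this
            simp [hj, vz, lastI]
          · rw [if_neg hj]
            have hj' : j ≠ lastI m := by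
              intro h; apply hj; rw [h]; rfl
            simp [Pi.single_apply, hj', if_neg hj]⟩
      · refine ⟨fun j => if j = j0 then 1 else 0, fun j => ?_⟩
        have hj0' : (j0 : ℕ) ≠ m + 1 := by omega
        by_cases hj : (j : ℕ) = m + 1
        · have : j ≠ j0 := by intro h; subst h; exact hj0' hj
          simp [Pi.single_apply, this, if_pos hj, if_neg this,
            (by intro h; subst h; exact hj0' hj : ¬ j = j0)]
        · rw [if_neg hj]
          have hlast : lastI m ≠ j0 := by
            intro h; apply hj0'; rw [← h]; rfl
          by_cases hjj : j = j0
          · subst hjj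
            simp [Pi.single_apply, hlast]
          · simp [Pi.single_apply, hjj, Ne.symm hjj, hlast]
    | zero => exact ⟨0, coords_zero m d⟩
    | add a b _ _ iha ihb =>
      obtain ⟨c1, h1⟩ := iha; obtain ⟨c2, h2⟩ := ihb
      exact ⟨c1 + c2, coords_add h1 h2⟩
    | smul a z _ ih =>
      obtain ⟨c1, h1⟩ := ih
      exact ⟨a • c1, coords_zsmul a h1⟩
  · rintro ⟨c, hc⟩
    have hxeq : x = (c (lastI m)) • craigV (m+2)
        + ∑ j ∈ Finset.univ.erase (lastI m), (c j) • ((d : ℚ) • (Pi.single j 1 : Fin (m+2) → ℚ)) := by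
      funext j
      simp only [Pi.add_apply, Pi.smul_apply, Finset.sum_apply, smul_eq_mul, zsmul_eq_mul]
      rw [hc j]
      by_cases hj : (j : ℕ) = m + 1
      · have hjl : j = lastI m := by apply Fin.ext; simpa [lastI]
        rw [if_pos hj]
        subst hjl
        rw [Finset.sum_eq_zero (by
          intro b hb
          have : b ≠ lastI m := (Finset.mem_erase.mp hb).1
          simp [Pi.single_apply, Ne.symm this])]
        simp [craigV, hj]
      · rw [if_neg hj]
        have hjl : j ≠ lastI m := by intro h; apply hj; rw [h]; rfl
        rw [Finset.sum_eq_single j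
          (by intro b _ hbj; simp [Pi.single_apply, Ne.symm hbj])
          (by intro h; exact absurd (Finset.mem_erase.mpr ⟨hjl, Finset.mem_univ j⟩) h)]
        simp only [Pi.mul_apply, Pi.smul_apply, smul_eq_mul, Pi.single_apply, if_pos rfl,
          craigV_eq_vz, Pi.intCast_apply]
        push_cast
        ring
    rw [hxeq]
    refine Submodule.add_mem _ (Submodule.smul_mem _ _ (Submodule.subset_span (Set.mem_insert _ _))) ?_
    refine Submodule.sum_mem _ fun j hj => Submodule.smul_mem _ _ (Submodule.subset_span ?_)
    refine Set.mem_insert_of_mem _ ⟨j, ?_, rfl⟩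
    have : j ≠ lastI m := (Finset.mem_erase.mp hj).1
    have : (j : ℕ) ≠ m + 1 := by
      intro h; exact this (by apply Fin.ext; simpa [lastI])
    omega

/-- value `y_{k-1} + 2 y_k + y_{k+1}` with out-of-range terms `0`. -/
def sVal (m : ℕ) (k : Fin (m+2)) (y : Fin (m+2) → ℚ) : ℚ :=
  (if h : (k : ℕ) = 0 then 0 else y ⟨(k : ℕ) - 1, by omega⟩)
  + 2 * y k
  + (if h : (k : ℕ) + 1 < m + 2 then y ⟨(k : ℕ) + 1, h⟩ else 0)

lemma craigA_mulVec (m : ℕ) (k : Fin (m+2)) (y : Fin (m+2) → ℚ) :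
    (craigA (m+2) k).mulVec y + y = fun i => if i = k then sVal m k y else 0 := by
  funext i
  simp only [Pi.add_apply, Matrix.mulVec, dotProduct, craigA, Matrix.of_apply]
  have expand : ∀ j : Fin (m+2),
      ((if (i : ℕ) = (k : ℕ) ∧ (j : ℕ) + 1 = (k : ℕ) then (1:ℚ) else 0)
      + (if (i : ℕ) = (k : ℕ) ∧ (j : ℕ) = (k : ℕ) then 2 else 0)
      + (if (i : ℕ) = (k : ℕ) ∧ (j : ℕ) = (k : ℕ) + 1 then 1 else 0)
      - (if i = j then 1 else 0)) * y j
      = (if (i : ℕ) = (k : ℕ) ∧ (j : ℕ) + 1 = (k : ℕ) then y j else 0)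
      + (if (i : ℕ) = (k : ℕ) ∧ (j : ℕ) = (k : ℕ) then 2 * y j else 0)
      + (if (i : ℕ) = (k : ℕ) ∧ (j : ℕ) = (k : ℕ) + 1 then y j else 0)
      - (if i = j then y j else 0) := by
    intro j
    split <;> split <;> split <;> split <;> ring
  rw [Finset.sum_congr rfl (fun j _ => expand j)]
  rw [Finset.sum_sub_distrib, Finset.sum_add_distrib, Finset.sum_add_distrib]
  have hs4 : ∑ j : Fin (m+2), (if i = j then y j else 0) = y i := by
    rw [Finset.sum_eq_single i (fun b _ hb => if_neg (Ne.symm hb)) (by simp)]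
    simp
  rw [hs4]
  by_cases hik : i = k
  · subst hik
    rw [if_pos rfl]
    simp only [true_and]
    have hs1 : ∑ j : Fin (m+2), (if (j : ℕ) + 1 = (i : ℕ) then y j else 0)
        = (if h : (i : ℕ) = 0 then 0 else y ⟨(i : ℕ) - 1, by have := i.isLt; omega⟩) := by
      by_cases h0 : (i : ℕ) = 0
      · rw [dif_pos h0]
        exact Finset.sum_eq_zero (fun j _ => if_neg (by omega))
      · rw [dif_neg h0]
        refine (Finset.sum_eq_single (⟨(i:ℕ)-1, by have := i.isLt; omega⟩ : Fin (m+2))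
          (fun b _ hb => if_neg (fun hb1 => hb (by apply Fin.ext; simp; omega)))
          (fun h => absurd (Finset.mem_univ _) h)).trans ?_
        rw [if_pos (by simp; omega)]
    have hs2 : ∑ j : Fin (m+2), (if (j : ℕ) = (i : ℕ) then 2 * y j else 0)
        = 2 * y i := by
      refine (Finset.sum_eq_single i (fun b _ hb => if_neg (fun hb1 => hb (Fin.ext hb1)))
        (fun h => absurd (Finset.mem_univ _) h)).trans (by rw [if_pos rfl])
    have hs3 : ∑ j : Fin (m+2), (if (j : ℕ) = (i : ℕ) + 1 then y j else 0)
        = (if h : (i : ℕ) + 1 < m + 2 then y ⟨(i : ℕ) + 1, h⟩ else 0) := by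
      by_cases h0 : (i : ℕ) + 1 < m + 2
      · rw [dif_pos h0]
        refine (Finset.sum_eq_single (⟨(i:ℕ)+1, h0⟩ : Fin (m+2))
          (fun b _ hb => if_neg (fun hb1 => hb (by apply Fin.ext; simp [hb1])))
          (fun h => absurd (Finset.mem_univ _) h)).trans ?_
        rw [if_pos (by simp)]
      · rw [dif_neg h0]
        exact Finset.sum_eq_zero (fun j _ => if_neg (by have := j.isLt; omega))
    rw [hs1, hs2, hs3]
    unfold sVal
    ring
  · rw [if_neg hik]
    have hik' : (i : ℕ) ≠ (k : ℕ) := fun h => hik (Fin.ext h)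
    have z1 : ∀ j : Fin (m+2), (if (i:ℕ) = (k:ℕ) ∧ (j : ℕ) + 1 = (k : ℕ) then y j else 0) = 0 :=
      fun j => if_neg (by simp [hik'])
    have z2 : ∀ j : Fin (m+2), (if (i:ℕ) = (k:ℕ) ∧ (j : ℕ) = (k : ℕ) then 2 * y j else 0) = 0 :=
      fun j => if_neg (by simp [hik'])
    have z3 : ∀ j : Fin (m+2), (if (i:ℕ) = (k:ℕ) ∧ (j : ℕ) = (k : ℕ) + 1 then y j else 0) = 0 :=
      fun j => if_neg (by simp [hik'])
    rw [Finset.sum_congr rfl (fun j _ => z1 j), Finset.sum_congr rfl (fun j _ => z2 j),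
      Finset.sum_congr rfl (fun j _ => z3 j)]
    simp

/-- the set of mod-`p` coordinate vectors of elements of `L`. -/
def SB (m d p : ℕ) (L : Submodule ℤ (Fin (m+2) → ℚ)) : Set (Fin (m+2) → ZMod p) :=
  {a | ∃ y ∈ L, ∃ c, Coords m d y c ∧ ∀ j, a j = ((c j : ℤ) : ZMod p)}

section SBlemmas

variable {m d p : ℕ} {L : Submodule ℤ (Fin (m+2) → ℚ)}

lemma SB_zero : (0 : Fin (m+2) → ZMod p) ∈ SB m d p L :=
  ⟨0, L.zero_mem, 0, coords_zero m d, by simp⟩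

lemma SB_add {a b : Fin (m+2) → ZMod p} (ha : a ∈ SB m d p L) (hb : b ∈ SB m d p L) :
    a + b ∈ SB m d p L := by
  obtain ⟨y, hy, c, hc, hac⟩ := ha
  obtain ⟨y', hy', c', hc', hbc⟩ := hb
  exact ⟨y + y', L.add_mem hy hy', c + c', coords_add hc hc',
    fun j => by simp [hac j, hbc j]⟩

lemma SB_smul [NeZero p] {a : Fin (m+2) → ZMod p} (r : ZMod p) (ha : a ∈ SB m d p L) :
    r • a ∈ SB m d p L := by
  obtain ⟨y, hy, c, hc, hac⟩ := ha
  refine ⟨(r.val : ℤ) • y, L.smul_mem _ hy, (r.val : ℤ) • c, coords_zsmul _ hc, fun j => ?_⟩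
  simp only [Pi.smul_apply, smul_eq_mul]
  push_cast
  rw [hac j, ZMod.natCast_val, ZMod.cast_id]

lemma SB_sum [NeZero p] {ι : Type*} (s : Finset ι) (f : ι → Fin (m+2) → ZMod p)
    (h : ∀ i ∈ s, f i ∈ SB m d p L) : (∑ i ∈ s, f i) ∈ SB m d p L := by
  classical
  induction s using Finset.induction with
  | empty => simpa using SB_zero
  | insert _ _ hnotmem ih =>
    rw [Finset.sum_insert hnotmem]
    exact SB_add (h _ (Finset.mem_insert_self _ _))
      (ih fun i hi => h i (Finset.mem_insert_of_mem hi))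

lemma coords_at {y : Fin (m+2) → ℚ} {c : Fin (m+2) → ℤ} (hc : Coords m d y c)
    (l : ℕ) (hl : l < m + 1) :
    y ⟨l, by omega⟩ = (c ⟨l, by omega⟩ : ℚ) * d + (c (lastI m) : ℚ) * (vz m ⟨l, by omega⟩ : ℚ) :=
  (hc _).trans (if_neg (by simp; omega))

lemma coords_last {y : Fin (m+2) → ℚ} {c : Fin (m+2) → ℤ} (hc : Coords m d y c) :
    y (lastI m) = (c (lastI m) : ℚ) :=
  (hc _).trans (if_pos rfl)

lemma sval_nat (k : ℕ) (hk2 : k < m + 2) (y : Fin (m+2) → ℚ) :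
    sVal m ⟨k, hk2⟩ y = (if h : k = 0 then 0 else y ⟨k - 1, by omega⟩) + 2 * y ⟨k, hk2⟩
      + (if h : k + 1 < m + 2 then y ⟨k + 1, h⟩ else 0) := rfl

variable (hAL : ∀ (k : Fin (m+2)), ∀ y ∈ L, (craigA (m+2) k).mulVec y ∈ L)

include hAL

lemma move1 {y : Fin (m+2) → ℚ} (hy : y ∈ L) {c : Fin (m+2) → ℤ} (hc : Coords m d y c)
    (k : ℕ) (hk : k + 1 < m + 1) :
    (fun j : Fin (m+2) => if (j : ℕ) = k
      then (((if k = 0 then 0 else c ⟨k - 1, by omega⟩) + 2 * c ⟨k, by omega⟩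
        + c ⟨k + 1, by omega⟩ : ℤ) : ZMod p) else 0) ∈ SB m d p L := by
  have hk2 : k < m + 2 := by omega
  have hz : ((craigA (m+2) ⟨k, hk2⟩).mulVec y + y) ∈ L := L.add_mem (hAL _ y hy) hy
  rw [craigA_mulVec] at hz
  have hsval : sVal m ⟨k, hk2⟩ y
      = (d : ℚ) * (((if k = 0 then 0 else c ⟨k - 1, by omega⟩) + 2 * c ⟨k, by omega⟩
        + c ⟨k + 1, by omega⟩ : ℤ) : ℚ) := by
    rw [sval_nat, dif_pos (by omega : k + 1 < m + 2)]
    rw [coords_at hc k (by omega), coords_at hc (k+1) (by omega)]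
    have hvz := vz_I1 m k hk
    by_cases h0 : k = 0
    · rw [if_pos h0] at hvz
      rw [dif_pos h0, if_pos h0]
      have hq := congrArg (fun t : ℤ => (t : ℚ)) hvz
      push_cast at hq ⊢
      linear_combination ((c (lastI m) : ℚ)) * hq
    · rw [if_neg h0] at hvz
      rw [dif_neg h0, if_neg h0, coords_at hc (k-1) (by omega)]
      have hq := congrArg (fun t : ℤ => (t : ℚ)) hvz
      push_cast at hq ⊢
      linear_combination ((c (lastI m) : ℚ)) * hq
  refine ⟨_, hz, fun j => if (j : ℕ) = k then
      ((if k = 0 then 0 else c ⟨k - 1, by omega⟩) + 2 * c ⟨k, by omega⟩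
        + c ⟨k + 1, by omega⟩ : ℤ) else 0, ?_, ?_⟩
  · intro j
    beta_reduce
    by_cases hj : j = (⟨k, hk2⟩ : Fin (m+2))
    · have hjv : (j : ℕ) = k := by rw [hj]
      rw [if_pos hj, hsval, if_neg (by omega : ¬ (j : ℕ) = m + 1), if_pos hjv,
        if_neg (by simp [lastI]; omega : ¬ ((lastI m : Fin (m+2)) : ℕ) = k)]
      ring
    · have hjv : ¬ (j : ℕ) = k := fun h => hj (Fin.ext h)
      rw [if_neg hj, if_neg (by simp [lastI]; omega : ¬ ((lastI m : Fin (m+2)) : ℕ) = k)]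
      by_cases hjl : (j : ℕ) = m + 1
      · rw [if_pos hjl, if_neg hjv]; simp
      · rw [if_neg hjl, if_neg hjv]; simp
  · intro j
    by_cases hjk : (j : ℕ) = k <;> simp [hjk]

lemma move2 (e : ℕ) (hde : d * e = m + 3) {y : Fin (m+2) → ℚ} (hy : y ∈ L)
    {c : Fin (m+2) → ℤ} (hc : Coords m d y c) :
    (fun j : Fin (m+2) => if (j : ℕ) = m
      then (((if m = 0 then 0 else c ⟨m - 1, by omega⟩) + 2 * c ⟨m, by omega⟩
        + (e : ℤ) * c (lastI m) : ℤ) : ZMod p) else 0) ∈ SB m d p L := by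
  have hk2 : m < m + 2 := by omega
  have hz : ((craigA (m+2) ⟨m, hk2⟩).mulVec y + y) ∈ L := L.add_mem (hAL _ y hy) hy
  rw [craigA_mulVec] at hz
  have hdeQ : (d : ℚ) * (e : ℚ) = (m : ℚ) + 3 := by
    have := congrArg (fun t : ℕ => (t : ℚ)) hde
    push_cast at this
    linarith [this]
  have hyl : y ⟨m + 1, by omega⟩ = (c (lastI m) : ℚ) := coords_last hc
  have hsval : sVal m ⟨m, hk2⟩ y
      = (d : ℚ) * (((if m = 0 then 0 else c ⟨m - 1, by omega⟩) + 2 * c ⟨m, by omega⟩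
        + (e : ℤ) * c (lastI m) : ℤ) : ℚ) := by
    rw [sval_nat, dif_pos (by omega : m + 1 < m + 2), hyl, coords_at hc m (by omega)]
    have hvz := vz_I2 m
    by_cases h0 : m = 0
    · rw [if_pos h0] at hvz
      rw [dif_pos h0, if_pos h0]
      have hq := congrArg (fun t : ℤ => (t : ℚ)) hvz
      push_cast at hq ⊢
      linear_combination ((c (lastI m) : ℚ)) * hq - ((c (lastI m) : ℚ)) * hdeQ
    · rw [if_neg h0] at hvz
      rw [dif_neg h0, if_neg h0, coords_at hc (m-1) (by omega)]
      have hq := congrArg (fun t : ℤ => (t : ℚ)) hvz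
      push_cast at hq ⊢
      linear_combination ((c (lastI m) : ℚ)) * hq - ((c (lastI m) : ℚ)) * hdeQ
  refine ⟨_, hz, fun j => if (j : ℕ) = m then
      ((if m = 0 then 0 else c ⟨m - 1, by omega⟩) + 2 * c ⟨m, by omega⟩
        + (e : ℤ) * c (lastI m) : ℤ) else 0, ?_, ?_⟩
  · intro j
    beta_reduce
    by_cases hj : j = (⟨m, hk2⟩ : Fin (m+2))
    · have hjv : (j : ℕ) = m := by rw [hj]
      rw [if_pos hj, hsval, if_neg (by omega : ¬ (j : ℕ) = m + 1), if_pos hjv,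
        if_neg (by simp [lastI] : ¬ ((lastI m : Fin (m+2)) : ℕ) = m)]
      ring
    · have hjv : ¬ (j : ℕ) = m := fun h => hj (Fin.ext h)
      rw [if_neg hj, if_neg (by simp [lastI] : ¬ ((lastI m : Fin (m+2)) : ℕ) = m)]
      by_cases hjl : (j : ℕ) = m + 1
      · rw [if_pos hjl, if_neg hjv]; simp
      · rw [if_neg hjl, if_neg hjv]; simp
  · intro j
    by_cases hjk : (j : ℕ) = m <;> simp [hjk]

lemma move3 (e : ℕ) (hde : d * e = m + 3) {y : Fin (m+2) → ℚ} (hy : y ∈ L)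
    {c : Fin (m+2) → ℤ} (hc : Coords m d y c) :
    (fun j : Fin (m+2) => if (j : ℕ) = m + 1
      then (((d : ℤ) * (c ⟨m, by omega⟩ + (e : ℤ) * c (lastI m)) : ℤ) : ZMod p)
      else ((-((c ⟨m, by omega⟩ + (e : ℤ) * c (lastI m)) * vz m j) : ℤ) : ZMod p))
        ∈ SB m d p L := by
  have hk2 : m + 1 < m + 2 := by omega
  have hz : ((craigA (m+2) ⟨m + 1, hk2⟩).mulVec y + y) ∈ L := L.add_mem (hAL _ y hy) hy
  rw [craigA_mulVec] at hz
  have hdeQ : (d : ℚ) * (e : ℚ) = (m : ℚ) + 3 := by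
    have := congrArg (fun t : ℕ => (t : ℚ)) hde
    push_cast at this
    linarith [this]
  have hyl : y ⟨m + 1, by omega⟩ = (c (lastI m) : ℚ) := coords_last hc
  have hsval : sVal m ⟨m + 1, hk2⟩ y
      = (d : ℚ) * ((c ⟨m, by omega⟩ + (e : ℤ) * c (lastI m) : ℤ) : ℚ) := by
    rw [sval_nat, dif_neg (by omega : ¬ (m + 1 = 0)), dif_neg (by omega : ¬ (m + 1 + 1 < m + 2)),
      hyl]
    have : (⟨m + 1 - 1, by omega⟩ : Fin (m + 2)) = ⟨m, by omega⟩ := by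
      apply Fin.ext; simp
    rw [this, coords_at hc m (by omega)]
    have hvz := vz_I3 m
    have hq := congrArg (fun t : ℤ => (t : ℚ)) hvz
    push_cast at hq ⊢
    linear_combination ((c (lastI m) : ℚ)) * hq - ((c (lastI m) : ℚ)) * hdeQ
  refine ⟨_, hz, fun j => if (j : ℕ) = m + 1
      then ((d : ℤ) * (c ⟨m, by omega⟩ + (e : ℤ) * c (lastI m)) : ℤ)
      else (-((c ⟨m, by omega⟩ + (e : ℤ) * c (lastI m)) * vz m j) : ℤ), ?_, ?_⟩
  · intro j
    beta_reduce
    by_cases hj : j = (⟨m + 1, hk2⟩ : Fin (m+2))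
    · have hjv : (j : ℕ) = m + 1 := by rw [hj]
      rw [if_pos hj, hsval, if_pos hjv, if_pos hjv]
      push_cast
      ring
    · have hjv : ¬ (j : ℕ) = m + 1 := fun h => hj (Fin.ext h)
      rw [if_neg hj, if_neg hjv, if_neg hjv,
        if_pos (by simp [lastI] : ((lastI m : Fin (m+2)) : ℕ) = m + 1)]
      push_cast
      ring
  · intro j
    by_cases hjk : (j : ℕ) = m + 1 <;> simp [hjk]

end SBlemmas

lemma rec_formula {R : Type*} [CommRing R] (m : ℕ) (b : ℕ → R)
    (h : ∀ k, k + 1 ≤ m → (if k = 0 then 0 else b (k-1)) + 2 * b k + b (k+1) = 0) :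
    ∀ k, k ≤ m → b k = (-1)^k * ((k : R) + 1) * b 0 := by
  intro k
  induction k using Nat.strong_induction_on with
  | _ k ih =>
    match k with
    | 0 => intro _; simp
    | 1 =>
      intro h1
      have := h 0 h1
      rw [if_pos rfl] at this
      push_cast
      linear_combination this
    | (k+2) =>
      intro hk2
      have e1 := ih (k+1) (by omega) (by omega)
      have e0 := ih k (by omega) (by omega)
      have hrec := h (k+1) (by omega)
      rw [if_neg (by omega)] at hrec
      simp only [Nat.add_sub_cancel] at hrec
      push_cast at e1 e0 ⊢
      linear_combination hrec - 2 * e1 - e0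

lemma rec_zero {p : ℕ} [Fact p.Prime] (m : ℕ) (b : ℕ → ZMod p) (lam : ZMod p)
    (h : ∀ k, k + 1 ≤ m → (if k = 0 then 0 else b (k-1)) + 2 * b k + b (k+1) = 0)
    (hfin : (if m = 0 then 0 else b (m-1)) + lam * b m = 0)
    (hu : lam * ((m : ZMod p) + 1) - (m : ZMod p) ≠ 0) :
    ∀ k, k ≤ m → b k = 0 := by
  have hb0 : b 0 = 0 := by
    rcases Nat.eq_zero_or_pos m with hm | hm
    · subst hm
      rw [if_pos rfl] at hfin
      rcases mul_eq_zero.mp (by linear_combination hfin : lam * b 0 = 0) with h' | h'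
      · exact absurd (by rw [h']; push_cast; ring) hu
      · exact h'
    · obtain ⟨mm, rfl⟩ : ∃ mm, m = mm + 1 := ⟨m - 1, by omega⟩
      rw [if_neg (by omega)] at hfin
      simp only [Nat.add_sub_cancel] at hfin
      rw [rec_formula (mm+1) b h mm (by omega), rec_formula (mm+1) b h (mm+1) (by omega)] at hfin
      have hsq : ((-1 : ZMod p)^mm) * ((-1 : ZMod p)^mm) = 1 := by
        rw [← pow_add]
        exact Even.neg_one_pow ⟨mm, rfl⟩
      have key : ((-1 : ZMod p)^mm * (lam * (((mm+1 : ℕ) : ZMod p) + 1) - ((mm+1 : ℕ) : ZMod p))) * b 0 = 0 := by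
        push_cast at hfin ⊢
        linear_combination (-1 : ZMod p) * hfin
      have key2 : (lam * (((mm+1 : ℕ) : ZMod p) + 1) - ((mm+1 : ℕ) : ZMod p)) * b 0 = 0 := by
        linear_combination ((-1 : ZMod p)^mm) * key
          - (lam * (((mm+1 : ℕ) : ZMod p) + 1) - ((mm+1 : ℕ) : ZMod p)) * b 0 * hsq
      rcases mul_eq_zero.mp key2 with h' | h'
      · exact absurd h' hu
      · exact h'
  intro k hk
  rw [rec_formula m b h k hk, hb0]
  ring

def epsv (m p : ℕ) (k : ℕ) : Fin (m+2) → ZMod p := fun j => if (j : ℕ) = k then 1 else 0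

section Props

variable {m d p : ℕ} {L : Submodule ℤ (Fin (m+2) → ℚ)}

lemma SB_congr {a b : Fin (m+2) → ZMod p} (h : a ∈ SB m d p L) (hab : ∀ j, a j = b j) :
    b ∈ SB m d p L := by
  obtain ⟨y, hy, c, hc, hac⟩ := h
  exact ⟨y, hy, c, hc, fun j => (hab j).symm.trans (hac j)⟩

variable [NeZero p]
variable (hAL : ∀ (k : Fin (m+2)), ∀ y ∈ L, (craigA (m+2) k).mulVec y ∈ L)
variable (e : ℕ) (hde : d * e = m + 3)

include hAL

lemma eps_step_down (k : ℕ) (hk : k + 1 ≤ m) (h : epsv m p (k+1) ∈ SB m d p L) :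
    epsv m p k ∈ SB m d p L := by
  obtain ⟨y, hy, c, hc, hac⟩ := h
  have cb : ∀ (l : ℕ) (hl : l < m + 2), ((c ⟨l, hl⟩ : ℤ) : ZMod p) = if l = k + 1 then 1 else 0 :=
    fun l hl => (hac ⟨l, hl⟩).symm
  refine SB_congr (move1 hAL hy hc k (by omega)) (fun j => ?_)
  unfold epsv
  by_cases hj : (j : ℕ) = k
  · rw [if_pos hj, if_pos hj]
    push_cast
    simp only [cb]
    simp [show ¬ k - 1 = k + 1 by omega, show ¬ k = k + 1 by omega]
  · rw [if_neg hj, if_neg hj]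

include hde

lemma eps_step_up (k : ℕ) (hk : k + 1 ≤ m) (h : epsv m p k ∈ SB m d p L) :
    epsv m p (k+1) ∈ SB m d p L := by
  obtain ⟨y, hy, c, hc, hac⟩ := h
  have cb : ∀ (l : ℕ) (hl : l < m + 2), ((c ⟨l, hl⟩ : ℤ) : ZMod p) = if l = k then 1 else 0 :=
    fun l hl => (hac ⟨l, hl⟩).symm
  by_cases hkm : k + 1 < m
  · refine SB_congr (move1 hAL hy hc (k+1) (by omega)) (fun j => ?_)
    unfold epsv
    by_cases hj : (j : ℕ) = k + 1
    · rw [if_pos hj, if_pos hj]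
      push_cast
      simp only [cb]
      simp [show k + 1 - 1 = k by omega, show ¬ k + 1 = k by omega,
        show ¬ k + 1 + 1 = k by omega]
    · rw [if_neg hj, if_neg hj]
  · have hkm' : k + 1 = m := by omega
    have hlast : ((lastI m : Fin (m+2)) : ℕ) = m + 1 := rfl
    refine SB_congr (move2 hAL e hde hy hc) (fun j => ?_)
    unfold epsv
    by_cases hj : (j : ℕ) = k + 1
    · rw [if_pos (by omega : (j : ℕ) = m), if_pos hj]
      push_cast
      have hclast : ((c (lastI m) : ℤ) : ZMod p) = 0 := by
        rw [show (lastI m : Fin (m+2)) = ⟨m + 1, by omega⟩ from rfl, cb,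
          if_neg (show ¬ m + 1 = k by omega)]
      simp only [cb, hclast]
      simp [show ¬ m = 0 by omega, show m - 1 = k by omega, show ¬ m = k by omega,
        hlast, show ¬ m + 1 = k by omega]
    · rw [if_neg (by omega : ¬ (j : ℕ) = m), if_neg hj]

lemma eps_all (k0 : ℕ) (hk0 : k0 ≤ m) (h : epsv m p k0 ∈ SB m d p L) :
    ∀ k, k ≤ m → epsv m p k ∈ SB m d p L := by
  have down : ∀ k, k ≤ m → epsv m p k ∈ SB m d p L → epsv m p 0 ∈ SB m d p L := by
    intro k
    induction k with
    | zero => exact fun _ h => h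
    | succ k ih => exact fun hk h => ih (by omega) (eps_step_down hAL k (by omega) h)
  have h0 : epsv m p 0 ∈ SB m d p L := down k0 hk0 h
  intro k
  induction k with
  | zero => exact fun _ => h0
  | succ k ih => exact fun hk => eps_step_up hAL e hde k (by omega) (ih (by omega))

omit hAL hde in
lemma SB_univ [Fact p.Prime] (heps : ∀ k, k ≤ m → epsv m p k ∈ SB m d p L)
    {a0 : Fin (m+2) → ZMod p} (ha0 : a0 ∈ SB m d p L) (hl0 : a0 (lastI m) ≠ 0)
    (a : Fin (m+2) → ZMod p) : a ∈ SB m d p L := by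
  set r := (a0 (lastI m))⁻¹ with hr
  set δ : Fin (m+2) → ZMod p := r • a0
      + ∑ jj : Fin (m+2), (if (jj : ℕ) = m+1 then 0 else (-(r * a0 jj)) • epsv m p (jj : ℕ))
    with hδ
  have hδSB : δ ∈ SB m d p L := by
    refine SB_add (SB_smul r ha0) (SB_sum _ _ fun jj _ => ?_)
    by_cases hjj : (jj : ℕ) = m + 1
    · rw [if_pos hjj]; exact SB_zero
    · rw [if_neg hjj]
      exact SB_smul _ (heps (jj : ℕ) (by have := jj.isLt; omega))
  have hδval : ∀ j, δ j = if (j : ℕ) = m+1 then 1 else 0 := by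
    intro j
    simp only [hδ, Pi.add_apply, Pi.smul_apply, Finset.sum_apply, smul_eq_mul]
    by_cases hj : (j : ℕ) = m + 1
    · rw [if_pos hj]
      rw [Finset.sum_eq_zero (fun b _ => by
        by_cases hb : (b : ℕ) = m + 1
        · simp [hb]
        · simp only [if_neg hb, Pi.smul_apply, smul_eq_mul, epsv]
          rw [if_neg (by omega : ¬ (j : ℕ) = (b : ℕ))]
          ring)]
      have hjl : j = lastI m := Fin.ext hj
      rw [hjl, add_zero, hr, inv_mul_cancel₀ hl0]
    · rw [if_neg hj]
      rw [Finset.sum_eq_single j (fun b _ hbj => by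
        by_cases hb : (b : ℕ) = m + 1
        · simp [hb]
        · simp only [if_neg hb, Pi.smul_apply, smul_eq_mul, epsv]
          rw [if_neg (fun h => hbj (Fin.ext h.symm))]
          ring) (fun h => absurd (Finset.mem_univ _) h)]
      simp only [if_neg hj, Pi.smul_apply, smul_eq_mul, epsv, if_pos rfl]
      simp
  have ha : a = ∑ jj : Fin (m+2),
      (if (jj : ℕ) = m+1 then a (lastI m) • δ else a jj • epsv m p (jj : ℕ)) := by
    funext j
    rw [Finset.sum_apply]
    rw [Finset.sum_eq_single j (fun b _ hbj => by
      by_cases hb : (b : ℕ) = m + 1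
      · simp only [if_pos hb, Pi.smul_apply, smul_eq_mul, hδval]
        rw [if_neg (fun h => hbj (Fin.ext (hb.trans h.symm)))]
        ring
      · simp only [if_neg hb, Pi.smul_apply, smul_eq_mul, epsv]
        rw [if_neg (fun h => hbj (Fin.ext h.symm))]
        ring) (fun h => absurd (Finset.mem_univ _) h)]
    by_cases hj : (j : ℕ) = m + 1
    · simp only [if_pos hj, Pi.smul_apply, smul_eq_mul, hδval, if_pos hj]
      rw [show j = lastI m from Fin.ext hj]
      ring
    · simp only [if_neg hj, Pi.smul_apply, smul_eq_mul, epsv, if_pos rfl]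
      simp
  rw [ha]
  refine SB_sum _ _ fun jj _ => ?_
  by_cases hjj : (jj : ℕ) = m + 1
  · rw [if_pos hjj]; exact SB_smul _ hδSB
  · rw [if_neg hjj]
    exact SB_smul _ (heps (jj : ℕ) (by have := jj.isLt; omega))

end Props

lemma vz_at_m (m : ℕ) : vz m ⟨m, by omega⟩ = (m : ℤ) + 1 := by
  have := vz_I3 m; omega

lemma vz_at_m1 (m : ℕ) (hm : 0 < m) : vz m ⟨m - 1, by omega⟩ = -(m : ℤ) := by
  have h2 := vz_I2 m
  rw [if_neg (by omega), vz_at_m] at h2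
  omega

section Keys

variable {m d p : ℕ} {L : Submodule ℤ (Fin (m+2) → ℚ)} [Fact p.Prime]

lemma eps_of_coeff {q : ℤ} {k : ℕ}
    (h : (fun j : Fin (m+2) => if (j : ℕ) = k then ((q : ℤ) : ZMod p) else 0) ∈ SB m d p L)
    (hq : ((q : ℤ) : ZMod p) ≠ 0) : epsv m p k ∈ SB m d p L := by
  haveI : NeZero p := ⟨(Fact.out : p.Prime).ne_zero⟩
  refine SB_congr (SB_smul (((q : ℤ) : ZMod p))⁻¹ h) (fun j => ?_)
  simp only [Pi.smul_apply, smul_eq_mul, epsv]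
  by_cases hj : (j : ℕ) = k
  · rw [if_pos hj, if_pos hj, inv_mul_cancel₀ hq]
  · rw [if_neg hj, if_neg hj, mul_zero]

variable (hAL : ∀ (k : Fin (m+2)), ∀ y ∈ L, (craigA (m+2) k).mulVec y ∈ L)
variable (e : ℕ) (hde : d * e = m + 3) (hp3 : ((m + 3 : ℕ) : ZMod p) = 0)

include hAL hde hp3

lemma key_eps (hep : ((e : ℕ) : ZMod p) = 0)
    {y : Fin (m+2) → ℚ} (hy : y ∈ L) {c : Fin (m+2) → ℤ} (hc : Coords m d y c)
    (l : ℕ) (hl : l < m + 1) (hcl : ((c ⟨l, by omega⟩ : ℤ) : ZMod p) ≠ 0) :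
    ∀ k, k ≤ m → epsv m p k ∈ SB m d p L := by
  haveI : NeZero p := ⟨(Fact.out : p.Prime).ne_zero⟩
  set b : ℕ → ZMod p := fun k => if h : k < m+2 then ((c ⟨k, h⟩ : ℤ) : ZMod p) else 0 with hbdef
  have hb : ∀ (k : ℕ) (hk : k < m+2), b k = ((c ⟨k, hk⟩ : ℤ) : ZMod p) := fun k hk => dif_pos hk
  have hm2 : ((m : ZMod p) + 2) = -1 := by
    have : ((m : ZMod p) + 3) = 0 := by push_cast at hp3; linear_combination hp3
    linear_combination this
  by_cases hex : ∀ k, k + 1 ≤ m → (if k = 0 then 0 else b (k-1)) + 2 * b k + b (k+1) = 0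
  · by_cases hfin : (if m = 0 then 0 else b (m-1)) + 2 * b m = 0
    · exfalso
      have hu : (2 : ZMod p) * ((m : ZMod p) + 1) - (m : ZMod p) ≠ 0 := by
        intro h0
        have : ((m : ZMod p) + 2) = 0 := by linear_combination h0
        rw [hm2] at this
        exact one_ne_zero (by linear_combination -this : (1 : ZMod p) = 0)
      have hall := rec_zero m b 2 hex hfin hu
      exact hcl ((hb l (by omega)).symm.trans (hall l (by omega)))
    · -- move2 coefficient is nonzero
      refine eps_all hAL e hde m le_rfl (eps_of_coeff (move2 hAL e hde hy hc) ?_)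
      have : (((if m = 0 then 0 else c ⟨m - 1, by omega⟩) + 2 * c ⟨m, by omega⟩
          + (e : ℤ) * c (lastI m) : ℤ) : ZMod p)
          = (if m = 0 then 0 else b (m-1)) + 2 * b m := by
        push_cast
        rw [hb m (by omega), hep]
        by_cases h0 : m = 0
        · rw [if_pos h0, if_pos h0]; ring
        · rw [if_neg h0, if_neg h0, hb (m-1) (by omega)]; ring
      rw [this]
      exact hfin
  · push_neg at hex
    obtain ⟨k, hk, hQ⟩ := hex
    refine eps_all hAL e hde k (by omega) (eps_of_coeff (move1 hAL hy hc k (by omega)) ?_)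
    have : (((if k = 0 then 0 else c ⟨k - 1, by omega⟩) + 2 * c ⟨k, by omega⟩
        + c ⟨k + 1, by omega⟩ : ℤ) : ZMod p)
        = (if k = 0 then 0 else b (k-1)) + 2 * b k + b (k+1) := by
      push_cast
      rw [hb k (by omega), hb (k+1) (by omega)]
      by_cases h0 : k = 0
      · rw [if_pos h0, if_pos h0]
      · rw [if_neg h0, if_neg h0, hb (k-1) (by omega)]
    rw [this]
    exact hQ

lemma key_eps_s (hep : ((e : ℕ) : ZMod p) ≠ 0) (hd0 : ((d : ℕ) : ZMod p) = 0)
    {y : Fin (m+2) → ℚ} (hy : y ∈ L) {c : Fin (m+2) → ℤ} (hc : Coords m d y c)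
    (hlast : ((c (lastI m) : ℤ) : ZMod p) ≠ 0) :
    ∀ k, k ≤ m → epsv m p k ∈ SB m d p L := by
  haveI : NeZero p := ⟨(Fact.out : p.Prime).ne_zero⟩
  set b : ℕ → ZMod p := fun k => if h : k < m+2 then ((c ⟨k, h⟩ : ℤ) : ZMod p) else 0 with hbdef
  have hb : ∀ (k : ℕ) (hk : k < m+2), b k = ((c ⟨k, hk⟩ : ℤ) : ZMod p) := fun k hk => dif_pos hk
  have hblast : b (m+1) = ((c (lastI m) : ℤ) : ZMod p) := hb (m+1) (by omega)
  have hm2 : ((m : ZMod p) + 2) = -1 := by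
    have : ((m : ZMod p) + 3) = 0 := by push_cast at hp3; linear_combination hp3
    linear_combination this
  by_cases hq : b m + (e : ZMod p) * b (m+1) ≠ 0
  · -- apply move3, then move2 on the result
    obtain ⟨y', hy', c', hc', hac'⟩ := move3 hAL e hde hy hc (p := p)
    have cb' : ∀ (j : Fin (m+2)), ((c' j : ℤ) : ZMod p)
        = if (j : ℕ) = m + 1
          then (((d : ℤ) * (c ⟨m, by omega⟩ + (e : ℤ) * c (lastI m)) : ℤ) : ZMod p)
          else ((-((c ⟨m, by omega⟩ + (e : ℤ) * c (lastI m)) * vz m j) : ℤ) : ZMod p) :=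
      fun j => (hac' j).symm
    refine eps_all hAL e hde m le_rfl (eps_of_coeff (move2 hAL e hde hy' hc') ?_)
    have hq'' : (((c ⟨m, by omega⟩ + (e : ℤ) * c (lastI m) : ℤ)) : ZMod p)
        = b m + (e : ZMod p) * b (m+1) := by
      push_cast
      rw [hb m (by omega), hblast]
    have hclast' : ((c' (lastI m) : ℤ) : ZMod p) = 0 := by
      rw [cb' (lastI m), if_pos (show ((lastI m : Fin (m+2)) : ℕ) = m + 1 from rfl)]
      push_cast
      rw [hd0]
      ring
    have hcm' : ((c' ⟨m, by omega⟩ : ℤ) : ZMod p)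
        = -((b m + (e : ZMod p) * b (m+1)) * ((m : ZMod p) + 1)) := by
      rw [cb' ⟨m, by omega⟩, if_neg (by simp)]
      push_cast [vz_at_m]
      push_cast at hq''
      linear_combination (-(m : ZMod p) - 1) * hq''
    have hval : (((if m = 0 then 0 else c' ⟨m - 1, by omega⟩) + 2 * c' ⟨m, by omega⟩
        + (e : ℤ) * c' (lastI m) : ℤ) : ZMod p)
        = (b m + (e : ZMod p) * b (m+1)) * (-((m : ZMod p) + 2)) := by
      by_cases h0 : m = 0
      · rw [if_pos h0]
        push_cast
        rw [hclast', hcm']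
        subst h0
        push_cast
        ring
      · rw [if_neg h0]
        have hcm1' : ((c' ⟨m - 1, by omega⟩ : ℤ) : ZMod p)
            = (b m + (e : ZMod p) * b (m+1)) * (m : ZMod p) := by
          rw [cb' ⟨m - 1, by omega⟩, if_neg (by simp)]
          push_cast [vz_at_m1 m (by omega)]
          push_cast at hq''
          linear_combination (m : ZMod p) * hq''
        push_cast
        rw [hclast', hcm', hcm1']
        ring
    rw [hval, hm2]
    intro h0
    rcases mul_eq_zero.mp h0 with h1 | h1
    · exact hq h1
    · exact one_ne_zero (by linear_combination h1 : (1 : ZMod p) = 0)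
  · push_neg at hq
    by_cases hex : ∀ k, k + 1 ≤ m → (if k = 0 then 0 else b (k-1)) + 2 * b k + b (k+1) = 0
    · by_cases hfin2 : (if m = 0 then 0 else b (m-1)) + 2 * b m + (e : ZMod p) * b (m+1) = 0
      · exfalso
        have hfin' : (if m = 0 then 0 else b (m-1)) + 1 * b m = 0 := by
          linear_combination hfin2 - hq
        have hu : (1 : ZMod p) * ((m : ZMod p) + 1) - (m : ZMod p) ≠ 0 := by
          intro h0
          exact one_ne_zero (by linear_combination h0 : (1 : ZMod p) = 0)
        have hall := rec_zero m b 1 hex hfin' hu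
        have hbm : b m = 0 := hall m le_rfl
        rw [hbm, zero_add] at hq
        rcases mul_eq_zero.mp hq with h1 | h1
        · exact hep h1
        · exact hlast (hblast.symm.trans h1)
      · refine eps_all hAL e hde m le_rfl (eps_of_coeff (move2 hAL e hde hy hc) ?_)
        have : (((if m = 0 then 0 else c ⟨m - 1, by omega⟩) + 2 * c ⟨m, by omega⟩
            + (e : ℤ) * c (lastI m) : ℤ) : ZMod p)
            = (if m = 0 then 0 else b (m-1)) + 2 * b m + (e : ZMod p) * b (m+1) := by
          push_cast
          rw [hb m (by omega), hblast]
          by_cases h0 : m = 0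
          · rw [if_pos h0, if_pos h0]
          · rw [if_neg h0, if_neg h0, hb (m-1) (by omega)]
        rw [this]
        exact hfin2
    · push_neg at hex
      obtain ⟨k, hk, hQ⟩ := hex
      refine eps_all hAL e hde k (by omega) (eps_of_coeff (move1 hAL hy hc k (by omega)) ?_)
      have : (((if k = 0 then 0 else c ⟨k - 1, by omega⟩) + 2 * c ⟨k, by omega⟩
          + c ⟨k + 1, by omega⟩ : ℤ) : ZMod p)
          = (if k = 0 then 0 else b (k-1)) + 2 * b k + b (k+1) := by
        push_cast
        rw [hb k (by omega), hb (k+1) (by omega)]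
        by_cases h0 : k = 0
        · rw [if_pos h0, if_pos h0]
        · rw [if_neg h0, if_neg h0, hb (k-1) (by omega)]
      rw [this]
      exact hQ

end Keys

lemma int_div_cast_mul {p : ℕ} (hp : 0 < p) {a : ℤ} (h : (p : ℤ) ∣ a) :
    ((a / (p : ℤ) : ℤ) : ℚ) * (p : ℚ) = (a : ℚ) := by
  obtain ⟨t, rfl⟩ := h
  rw [Int.mul_ediv_cancel_left _ (by exact_mod_cast hp.ne' : (p : ℤ) ≠ 0)]
  push_cast
  ring

lemma mem_next {m d p : ℕ} (hp : 0 < p) {y : Fin (m+2) → ℚ} {c : Fin (m+2) → ℤ}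
    (hc : Coords m d y c)
    (hdvd : ∀ (l : ℕ) (hl : l < m + 1), (p : ℤ) ∣ c ⟨l, by omega⟩) :
    y ∈ craigL (m+2) (p * d) := by
  rw [mem_craigL_iff]
  refine ⟨fun j => if (j : ℕ) = m+1 then c j else c j / p, fun j => ?_⟩
  beta_reduce
  by_cases hj : (j : ℕ) = m+1
  · rw [hc j, if_pos hj, if_pos hj, if_pos hj]
  · have hjd : (p : ℤ) ∣ c j := by
      have := hdvd (j : ℕ) (by omega)
      rwa [Fin.eta] at this
    have hpd : ((lastI m : Fin (m+2)) : ℕ) = m + 1 := rfl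
    rw [hc j, if_neg hj, if_neg hj, if_neg hj, if_pos hpd]
    have h1 := int_div_cast_mul hp hjd
    push_cast at h1 ⊢
    linear_combination (-(d : ℚ)) * h1

lemma mem_psmul {m d'' p : ℕ} (hp : 0 < p) {y : Fin (m+2) → ℚ} {c : Fin (m+2) → ℤ}
    (hc : Coords m (p * d'') y c) (hdvd : (p : ℤ) ∣ c (lastI m)) :
    y ∈ (p : ℚ) • craigL (m+2) d'' := by
  have hp0 : (p : ℚ) ≠ 0 := Nat.cast_ne_zero.mpr (by omega)
  have hdiv := int_div_cast_mul hp hdvd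
  have hz : ((p : ℚ)⁻¹ • y) ∈ craigL (m+2) d'' := by
    rw [mem_craigL_iff]
    refine ⟨fun j => if (j : ℕ) = m+1 then c j / p else c j, fun j => ?_⟩
    beta_reduce
    by_cases hj : (j : ℕ) = m+1
    · have hjl : j = lastI m := Fin.ext hj
      rw [Pi.smul_apply, hc j, if_pos hj, if_pos hj, if_pos hj, hjl, smul_eq_mul]
      rw [inv_mul_eq_iff_eq_mul₀ hp0]
      push_cast at hdiv ⊢
      linear_combination -hdiv
    · have hpd : ((lastI m : Fin (m+2)) : ℕ) = m + 1 := rfl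
      rw [Pi.smul_apply, hc j, if_neg hj, if_neg hj, if_neg hj, if_pos hpd, smul_eq_mul]
      rw [inv_mul_eq_iff_eq_mul₀ hp0]
      push_cast at hdiv ⊢
      linear_combination (-((vz m j : ℤ) : ℚ)) * hdiv
  have := Submodule.smul_mem_pointwise_smul _ ((p : ℚ)) _ hz
  rwa [smul_inv_smul₀ hp0] at this

lemma L_eq_of_full {m d p : ℕ} [Fact p.Prime] {L : Submodule ℤ (Fin (m+2) → ℚ)}
    (hL1 : L ≤ craigL (m+2) d)
    (hfull : ∀ a : Fin (m+2) → ZMod p, a ∈ SB m d p L) (mm : ℕ)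
    (hidx : AddSubgroup.relIndex L.toAddSubgroup (craigL (m+2) d).toAddSubgroup = p ^ mm) :
    L = craigL (m+2) d := by
  haveI : NeZero p := ⟨(Fact.out : p.Prime).ne_zero⟩
  have hp0 : (p : ℚ) ≠ 0 := Nat.cast_ne_zero.mpr (Fact.out : p.Prime).ne_zero
  have step1 : ∀ x ∈ craigL (m+2) d, ∃ y ∈ L, ∃ z ∈ craigL (m+2) d, x = y + (p : ℚ) • z := by
    intro x hx
    obtain ⟨c, hc⟩ := (mem_craigL_iff m d x).mp hx
    obtain ⟨y, hy, c', hc', hac⟩ := hfull (fun j => ((c j : ℤ) : ZMod p))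
    have hdvd : ∀ j, (p : ℤ) ∣ (c j - c' j) := by
      intro j
      rw [← ZMod.intCast_zmod_eq_zero_iff_dvd]
      push_cast
      rw [← hac j]
      push_cast
      ring
    refine ⟨y, hy, (p : ℚ)⁻¹ • (x - y), ?_, by rw [smul_inv_smul₀ hp0]; ring⟩
    rw [mem_craigL_iff]
    refine ⟨fun j => (c j - c' j) / p, fun j => ?_⟩
    have hdiv : ∀ j, (((c j - c' j) / (p : ℤ) : ℤ) : ℚ) * (p : ℚ) = ((c j - c' j : ℤ) : ℚ) :=
      fun j => int_div_cast_mul (Fact.out : p.Prime).pos (hdvd j)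
    by_cases hj : (j : ℕ) = m+1
    · rw [Pi.smul_apply, Pi.sub_apply, hc j, hc' j, if_pos hj, if_pos hj, if_pos hj, smul_eq_mul]
      rw [inv_mul_eq_iff_eq_mul₀ hp0]
      have h1 := hdiv j
      push_cast at h1 ⊢
      linear_combination -h1
    · rw [Pi.smul_apply, Pi.sub_apply, hc j, hc' j, if_neg hj, if_neg hj, if_neg hj, smul_eq_mul]
      rw [inv_mul_eq_iff_eq_mul₀ hp0]
      have h1 := hdiv j
      have h2 := hdiv (lastI m)
      push_cast at h1 h2 ⊢
      linear_combination (-(d : ℚ)) * h1 + (-((vz m j : ℤ) : ℚ)) * h2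
  have stepN : ∀ (N : ℕ), ∀ x ∈ craigL (m+2) d,
      ∃ y ∈ L, ∃ z ∈ craigL (m+2) d, x = y + ((p : ℚ) ^ N) • z := by
    intro N
    induction N with
    | zero => exact fun x hx => ⟨0, L.zero_mem, x, hx, by simp⟩
    | succ N ih =>
      intro x hx
      obtain ⟨y, hy, z, hz, hxyz⟩ := ih x hx
      obtain ⟨y', hy', z', hz', hzyz⟩ := step1 z hz
      refine ⟨y + ((p : ℚ) ^ N) • y', ?_, z', hz', ?_⟩
      · refine L.add_mem hy ?_
        have : ((p : ℚ) ^ N) • y' = ((p ^ N : ℤ)) • y' := by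
          push_cast
          rw [← Int.cast_smul_eq_zsmul ℚ]
          push_cast
          rfl
        rw [this]
        exact L.smul_mem _ hy'
      · rw [hxyz, hzyz]
        rw [smul_add, smul_smul, ← pow_succ]
        abel
  have key : ∀ z ∈ craigL (m+2) d, ((p : ℚ) ^ mm) • z ∈ L := by
    intro z hz
    have h1 := AddSubgroup.nsmul_index_mem
      (L.toAddSubgroup.addSubgroupOf (craigL (m+2) d).toAddSubgroup)
      (⟨z, hz⟩ : (craigL (m+2) d).toAddSubgroup)
    rw [AddSubgroup.mem_addSubgroupOf] at h1
    have hidx' : (L.toAddSubgroup.addSubgroupOf (craigL (m+2) d).toAddSubgroup).index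
        = p ^ mm := hidx
    rw [hidx'] at h1
    have h2 : (((p ^ mm • (⟨z, hz⟩ : (craigL (m+2) d).toAddSubgroup)) :
        (craigL (m+2) d).toAddSubgroup) : Fin (m+2) → ℚ) = (p ^ mm : ℕ) • z := rfl
    rw [h2] at h1
    have h3 : ((p : ℚ) ^ mm) • z = (p ^ mm : ℕ) • z := by
      rw [← Nat.cast_smul_eq_nsmul ℚ]
      push_cast
      rfl
    rwa [h3]
  refine le_antisymm hL1 (fun x hx => ?_)
  obtain ⟨y, hy, z, hz, hxyz⟩ := stepN mm x hx
  rw [hxyz]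
  exact L.add_mem hy (key z hz)


/-- Lemma 3: a proper `ℤG`-sublattice `L` of `L(p^i)` of finite
`p`-power index is contained in `L(p)` (if `i = 0`), in `L(p^{i+1})` or
`p·L(p^{i-1})` (if `0 < i < v_p(n+1)`), and in `p·L(p^{v_p(n+1)-1})`
(if `i = v_p(n+1)`). -/
theorem proper_sublattice_containment (n : ℕ) (hn : 2 ≤ n)
    (ρ : Equiv.Perm (Fin (n + 1)) →* Matrix (Fin n) (Fin n) ℚ)
    (hρ : ∀ k : Fin n, ρ (Equiv.swap k.castSucc k.succ) = craigA n k)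
    (p : ℕ) (hp : p.Prime) (hpd : p ∣ n + 1)
    (i : ℕ) (hi : i ≤ padicValNat p (n + 1))
    (L : Submodule ℤ (Fin n → ℚ)) (hL : IsSubl ρ (craigL n (p ^ i)) L)
    (hprop : L ≠ craigL n (p ^ i))
    (hidx : ∃ m : ℕ, subIndex L (craigL n (p ^ i)) = p ^ m) :
    (i = 0 → L ≤ craigL n p) ∧
    (0 < i → i < padicValNat p (n + 1) →
      L ≤ craigL n (p ^ (i + 1)) ∨ L ≤ (p : ℚ) • craigL n (p ^ (i - 1))) ∧
    (i = padicValNat p (n + 1) →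
      L ≤ (p : ℚ) • craigL n (p ^ (padicValNat p (n + 1) - 1))) := by
  haveI : Fact p.Prime := ⟨hp⟩
  haveI : NeZero p := ⟨hp.ne_zero⟩
  obtain ⟨m, rfl⟩ : ∃ m, n = m + 2 := ⟨n - 2, by omega⟩
  have hAL : ∀ (k : Fin (m+2)), ∀ y ∈ L, (craigA (m+2) k).mulVec y ∈ L := by
    intro k y hy
    have := hL.2 (Equiv.swap k.castSucc k.succ) y hy
    rwa [hρ k] at this
  have hL1 : L ≤ craigL (m+2) (p ^ i) := hL.1
  obtain ⟨mm, hmm⟩ := hidx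
  have hpd3 : p ∣ m + 3 := hpd
  have hn3 : m + 3 ≠ 0 := by omega
  have hdvd : p ^ i ∣ m + 3 := dvd_trans (pow_dvd_pow p hi) pow_padicValNat_dvd
  set e := (m + 3) / (p ^ i) with hedef
  have hde : (p ^ i) * e = m + 3 := Nat.mul_div_cancel' hdvd
  have hp3 : ((m + 3 : ℕ) : ZMod p) = 0 := (ZMod.natCast_eq_zero_iff _ _).mpr hpd3
  have contra : (∀ a : Fin (m+2) → ZMod p, a ∈ SB m (p ^ i) p L) → False :=
    fun hfull => hprop (L_eq_of_full hL1 hfull mm hmm)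
  have ext1 : ¬ (L ≤ craigL (m+2) (p * p ^ i)) → ∃ y ∈ L, ∃ c, Coords m (p ^ i) y c ∧
      ∃ (l : ℕ) (hl : l < m + 1), ((c ⟨l, by omega⟩ : ℤ) : ZMod p) ≠ 0 := by
    intro hnot
    rw [SetLike.not_le_iff_exists] at hnot
    obtain ⟨y, hy, hyn⟩ := hnot
    obtain ⟨c, hc⟩ := (mem_craigL_iff m (p ^ i) y).mp (hL1 hy)
    refine ⟨y, hy, c, hc, ?_⟩
    by_contra hno
    push_neg at hno
    refine hyn (mem_next hp.pos hc (fun l hl => ?_))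
    exact_mod_cast (ZMod.intCast_zmod_eq_zero_iff_dvd _ _).mp (hno l hl)
  refine ⟨?_, ?_, ?_⟩
  · -- i = 0
    intro hi0
    subst hi0
    by_contra hnot
    have hnot' : ¬ (L ≤ craigL (m+2) (p * p ^ 0)) := by
      rwa [pow_zero, Nat.mul_one]
    obtain ⟨y, hy, c, hc, l, hl, hcl⟩ := ext1 hnot'
    have hep : ((e : ℕ) : ZMod p) = 0 := by
      rw [ZMod.natCast_eq_zero_iff]
      have h' := hde
      rw [pow_zero, one_mul] at h'
      rw [h']
      exact hpd3
    have heps := key_eps hAL e hde hp3 hep hy hc l hl hcl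
    -- construct a0 with nonzero last coordinate via move3 on a witness of epsv m
    obtain ⟨y', hy', c', hc', hac'⟩ := heps m le_rfl
    have cb' : ∀ (l : ℕ) (hl : l < m + 2), ((c' ⟨l, hl⟩ : ℤ) : ZMod p) = if l = m then 1 else 0 :=
      fun l hl => (hac' ⟨l, hl⟩).symm
    have ha0 := move3 hAL e hde hy' hc' (p := p)
    refine contra (fun a => SB_univ heps ha0 ?_ a)
    beta_reduce
    rw [if_pos (show ((lastI m : Fin (m+2)) : ℕ) = m + 1 from rfl)]
    push_cast
    rw [pow_zero, cb' m (by omega), if_pos rfl, hep]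
    norm_num
  · -- 0 < i < v
    intro hipos hilt
    by_cases hfirst : L ≤ craigL (m+2) (p ^ (i + 1))
    · exact Or.inl hfirst
    refine Or.inr ?_
    by_contra hnot
    have hnot1 : ¬ (L ≤ craigL (m+2) (p * p ^ i)) := by
      rwa [show p * p ^ i = p ^ (i+1) from by rw [pow_succ, Nat.mul_comm]]
    obtain ⟨y, hy, c, hc, l, hl, hcl⟩ := ext1 hnot1
    have hppi : p * p ^ (i - 1) = p ^ i := by
      rw [← pow_succ']
      congr 1
      omega
    have hep : ((e : ℕ) : ZMod p) = 0 := by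
      rw [ZMod.natCast_eq_zero_iff]
      have hilt' : i < padicValNat p (m + 3) := hilt
      have h1 : p ^ (i + 1) ∣ m + 3 :=
        dvd_trans (pow_dvd_pow p (by omega : i + 1 ≤ padicValNat p (m + 3))) pow_padicValNat_dvd
      rw [← hde, pow_succ] at h1
      exact (Nat.mul_dvd_mul_iff_left (Nat.pow_pos (n := i) hp.pos)).mp h1
    have heps := key_eps hAL e hde hp3 hep hy hc l hl hcl
    -- second violating element
    rw [SetLike.not_le_iff_exists] at hnot
    obtain ⟨y2, hy2, hy2n⟩ := hnot
    obtain ⟨c2, hc2⟩ := (mem_craigL_iff m (p ^ i) y2).mp (hL1 hy2)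
    have hc2' : Coords m (p * p ^ (i - 1)) y2 c2 := by rwa [hppi]
    have hc2last : ((c2 (lastI m) : ℤ) : ZMod p) ≠ 0 := by
      intro h0
      exact hy2n (mem_psmul hp.pos hc2'
        ((ZMod.intCast_zmod_eq_zero_iff_dvd _ _).mp h0))
    exact contra (fun a => SB_univ heps
      (show (fun j => ((c2 j : ℤ) : ZMod p)) ∈ SB m (p ^ i) p L from
        ⟨y2, hy2, c2, hc2, fun j => rfl⟩) hc2last a)
  · -- i = v
    intro hieq
    have hieq' : i = padicValNat p (m + 3) := hieq
    have hv1 : 1 ≤ padicValNat p (m + 3) := by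
      by_contra hv0
      have hv0' : padicValNat p (m + 3) = 0 := by omega
      have hnd := pow_succ_padicValNat_not_dvd hn3 (p := p)
      rw [hv0', pow_one] at hnd
      exact hnd hpd3
    rw [← hieq]
    by_contra hnot
    have hppi : p * p ^ (i - 1) = p ^ i := by
      rw [← pow_succ']
      congr 1
      omega
    rw [SetLike.not_le_iff_exists] at hnot
    obtain ⟨y, hy, hyn⟩ := hnot
    obtain ⟨c, hc⟩ := (mem_craigL_iff m _ y).mp (hL1 hy)
    have hc' : Coords m (p * p ^ (i - 1)) y c := by rwa [hppi]
    have hclast : ((c (lastI m) : ℤ) : ZMod p) ≠ 0 := by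
      intro h0
      exact hyn (mem_psmul hp.pos hc' ((ZMod.intCast_zmod_eq_zero_iff_dvd _ _).mp h0))
    have hep : ((e : ℕ) : ZMod p) ≠ 0 := by
      rw [Ne, ZMod.natCast_eq_zero_iff]
      intro hpe
      have hstep : p ^ (i + 1) ∣ m + 3 := by
        rw [pow_succ, ← hde]
        exact Nat.mul_dvd_mul_left _ hpe
      exact pow_succ_padicValNat_not_dvd hn3 (hieq' ▸ hstep)
    have hd0 : ((p ^ i : ℕ) : ZMod p) = 0 := by
      rw [ZMod.natCast_eq_zero_iff]
      exact dvd_pow_self p (by omega)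
    have heps := key_eps_s hAL e hde hp3 hep hd0 hy hc hclast
    exact contra (fun a => SB_univ heps
      (show (fun j => ((c j : ℤ) : ZMod p)) ∈ SB m (p ^ i) p L from
        ⟨y, hy, c, hc, fun j => rfl⟩) hclast a)
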